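/- Let I = (0, ρ) with 0 < ρ ≤ ∞, α ≥ 0 real, and f(x) = x^α. For every real positive semidefinite 2×2 matrix A = [[a, b], [b, c]] with all entries in I, the matrix f_⋄(A) := [[a^α, αb a^{α-1}], [αb a^{α-1}, αc a^{α-1} + α(α-1) b² a^{α-2}]] is positive semidefinite. Conversely, if α < 0 then there exists such an A for which f_⋄(A) is not positive semidefinite. -/

import Mathlib

lemma psd2 (a b c : ℝ) (ha : 0 ≤ a) (hc : 0 ≤ c) (hd : b ^ 2 ≤ a * c) :
    Matrix.PosSemidef !![a, b; b, c] := by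
  rw [Matrix.posSemidef_iff_dotProduct_mulVec]
  constructor
  · ext i j
    fin_cases i <;> fin_cases j <;>
      simp [Matrix.conjTranspose, Matrix.vecHead, Matrix.vecTail]
  · intro x
    simp only [star_trivial, dotProduct, Matrix.mulVec, Fin.sum_univ_two,
      Matrix.cons_val', Matrix.cons_val_zero, Matrix.cons_val_one, Matrix.head_cons,
      Matrix.empty_val', Matrix.cons_val_fin_one, Matrix.head_fin_const, Matrix.of_apply,
      Matrix.cons_val_zero]
    rcases ha.eq_or_lt with h0 | h0
    · have hb : b = 0 := by nlinarith [sq_nonneg b]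
      subst hb
      nlinarith [mul_nonneg hc (sq_nonneg (x 1)), mul_nonneg ha (sq_nonneg (x 0))]
    · nlinarith [sq_nonneg (a * x 0 + b * x 1),
        mul_nonneg (sub_nonneg.2 hd) (sq_nonneg (x 1)), h0]

lemma det2 (a b c : ℝ) (ha : 0 < a) (h : Matrix.PosSemidef !![a, b; b, c]) :
    b ^ 2 ≤ a * c := by
  have := h.dotProduct_mulVec_nonneg ![b, -a]
  simp only [star_trivial, dotProduct, Matrix.mulVec, Fin.sum_univ_two,
    Matrix.cons_val', Matrix.cons_val_zero, Matrix.cons_val_one, Matrix.head_cons,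
    Matrix.empty_val', Matrix.cons_val_fin_one, Matrix.head_fin_const, Matrix.of_apply] at this
  nlinarith

lemma notpsd2 (p q r : ℝ) (hp : 0 < p) (hd : p * r < q ^ 2) :
    ¬ Matrix.PosSemidef !![p, q; q, r] := by
  intro h
  have := h.dotProduct_mulVec_nonneg ![q, -p]
  simp only [star_trivial, dotProduct, Matrix.mulVec, Fin.sum_univ_two,
    Matrix.cons_val', Matrix.cons_val_zero, Matrix.cons_val_one, Matrix.head_cons,
    Matrix.empty_val', Matrix.cons_val_fin_one, Matrix.head_fin_const, Matrix.of_apply] at this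
  nlinarith

theorem conv_power_function_two_by_two (ρ : ℝ) (hρ : 0 < ρ) (α : ℝ) :
    (0 ≤ α → ∀ a b c : ℝ, a ∈ Set.Ioo 0 ρ → b ∈ Set.Ioo 0 ρ → c ∈ Set.Ioo 0 ρ →
      Matrix.PosSemidef !![a, b; b, c] →
      Matrix.PosSemidef
        !![a ^ α, α * b * a ^ (α - 1);
           α * b * a ^ (α - 1), α * c * a ^ (α - 1) + α * (α - 1) * b ^ 2 * a ^ (α - 2)]) ∧
    (α < 0 → ∃ a b c : ℝ, a ∈ Set.Ioo 0 ρ ∧ b ∈ Set.Ioo 0 ρ ∧ c ∈ Set.Ioo 0 ρ ∧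
      Matrix.PosSemidef !![a, b; b, c] ∧
      ¬ Matrix.PosSemidef
        !![a ^ α, α * b * a ^ (α - 1);
           α * b * a ^ (α - 1), α * c * a ^ (α - 1) + α * (α - 1) * b ^ 2 * a ^ (α - 2)]) := by
  constructor
  · intro hα a b c ha hb hc hA
    obtain ⟨ha0, _⟩ := ha
    obtain ⟨hb0, _⟩ := hb
    obtain ⟨hc0, _⟩ := hc
    have hd : b ^ 2 ≤ a * c := det2 a b c ha0 hA
    set t := a ^ (α - 2) with ht_def
    have ht : 0 < t := Real.rpow_pos_of_pos ha0 _
    have h1 : a ^ (α - 1) = t * a := by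
      rw [ht_def, ← Real.rpow_add_one ha0.ne']; ring_nf
    have h2 : a ^ α = t * a * a := by
      rw [ht_def, ← Real.rpow_add_one ha0.ne', ← Real.rpow_add_one ha0.ne']; ring_nf
    rw [h1, h2]
    apply psd2
    · positivity
    · nlinarith [mul_nonneg (mul_nonneg hα ht.le) (sub_nonneg.2 hd),
        mul_nonneg (mul_nonneg (mul_nonneg hα hα) ht.le) (sq_nonneg b)]
    · nlinarith [mul_nonneg (mul_nonneg (mul_nonneg hα (sub_nonneg.2 hd))
        (mul_pos ht ht).le) (mul_pos ha0 ha0).le]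
  · intro hα
    refine ⟨ρ/2, ρ/4, ρ/2, ⟨by linarith, by linarith⟩, ⟨by linarith, by linarith⟩,
      ⟨by linarith, by linarith⟩, psd2 _ _ _ (by linarith) (by linarith) (by nlinarith), ?_⟩
    set a := ρ/2 with ha_def
    have ha0 : 0 < a := by rw [ha_def]; linarith
    set t := a ^ (α - 2) with ht_def
    have ht : 0 < t := Real.rpow_pos_of_pos ha0 _
    have h1 : a ^ (α - 1) = t * a := by
      rw [ht_def, ← Real.rpow_add_one ha0.ne']; ring_nf
    have h2 : a ^ α = t * a * a := by
      rw [ht_def, ← Real.rpow_add_one ha0.ne', ← Real.rpow_add_one ha0.ne']; ring_nf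
    rw [h1, h2]
    apply notpsd2
    · positivity
    · have hb4 : ρ / 4 = a / 2 := by rw [ha_def]; ring
      have key : t * t * (a * a * (a * a)) * α < 0 :=
        mul_neg_of_pos_of_neg (by positivity) hα
      rw [hb4]
      nlinarith [key]
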